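/- Let X be a real Banach space which is uniformly convex with modulus η and let b ≥ 1/2 be a real number. Define, for all ε ∈ (0,2], ψ_{b,η}(ε) := min( (min(ε/2, (ε²/(72b))·η(ε/(2b))²))²/4 , (ε²/48)·η(ε/(2b))² ). Then for all ε ∈ (0,2]: (a) ψ_{b,η}(ε) > 0; and (b) for all x, y ∈ X with ‖x‖ ≤ b, ‖y‖ ≤ b and ‖x − y‖ ≥ ε, one has ‖(x+y)/2‖² + ψ_{b,η}(ε) ≤ (1/2)‖x‖² + (1/2)‖y‖². -/

import Mathlib

set_option maxHeartbeats 1000000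


/-- The quantity ψ_{b,η}(ε) from Proposition 2.4 of Kohlenbach–Sipoş. -/
noncomputable def psiModulus (η : ℝ → ℝ) (b ε : ℝ) : ℝ :=
  min ((min (ε / 2) (ε ^ 2 / (72 * b) * η (ε / (2 * b)) ^ 2)) ^ 2 / 4)
      (ε ^ 2 / 48 * η (ε / (2 * b)) ^ 2)

theorem psiModulus_spec
    {X : Type*} [NormedAddCommGroup X] [NormedSpace ℝ X] [CompleteSpace X]
    (η : ℝ → ℝ)
    (hη_range : ∀ ε : ℝ, 0 < ε → ε ≤ 2 → 0 < η ε ∧ η ε ≤ 1)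
    (hX_uc : ∀ ε : ℝ, 0 < ε → ε ≤ 2 → ∀ x y : X, ‖x‖ ≤ 1 → ‖y‖ ≤ 1 →
      ε ≤ ‖x - y‖ → ‖(1 / 2 : ℝ) • (x + y)‖ ≤ 1 - η ε)
    (b : ℝ) (hb : (1 / 2 : ℝ) ≤ b) :
    ∀ ε : ℝ, 0 < ε → ε ≤ 2 →
      (0 < psiModulus η b ε) ∧
      (∀ x y : X, ‖x‖ ≤ b → ‖y‖ ≤ b → ε ≤ ‖x - y‖ →
        ‖(1 / 2 : ℝ) • (x + y)‖ ^ 2 + psiModulus η b ε ≤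
          (1 / 2) * ‖x‖ ^ 2 + (1 / 2) * ‖y‖ ^ 2) := by
  intro ε hε0 hε2
  have hb0 : (0 : ℝ) < b := by linarith
  have h2b : (1 : ℝ) ≤ 2 * b := by linarith
  have hε'pos : 0 < ε / (2 * b) := by positivity
  have hε'le : ε / (2 * b) ≤ 2 := by
    rw [div_le_iff₀ (by linarith)]; nlinarith
  obtain ⟨hηpos, hηle⟩ := hη_range _ hε'pos hε'le
  set η' := η (ε / (2 * b)) with hη'
  set δ : ℝ := min (ε / 2) (ε ^ 2 / (72 * b) * η' ^ 2) with hδdef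
  have hδpos : 0 < δ := lt_min (by linarith) (by positivity)
  have hδle : δ ≤ ε ^ 2 / (72 * b) * η' ^ 2 := min_le_right _ _
  have hψ : psiModulus η b ε = min (δ ^ 2 / 4) (ε ^ 2 / 48 * η' ^ 2) := rfl
  have hψ1 : psiModulus η b ε ≤ δ ^ 2 / 4 := by rw [hψ]; exact min_le_left _ _
  have hψ2 : psiModulus η b ε ≤ ε ^ 2 / 48 * η' ^ 2 := by rw [hψ]; exact min_le_right _ _
  have hψpos : 0 < psiModulus η b ε := by
    rw [hψ]; exact lt_min (by positivity) (by positivity)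
  refine ⟨hψpos, ?_⟩
  have key : ∀ x y : X, ‖x‖ ≤ b → ‖y‖ ≤ b → ‖y‖ ≤ ‖x‖ → ε ≤ ‖x - y‖ →
      ‖(1 / 2 : ℝ) • (x + y)‖ ^ 2 + psiModulus η b ε ≤
        (1 / 2) * ‖x‖ ^ 2 + (1 / 2) * ‖y‖ ^ 2 := by
    intro x y hx hy hyx hxy
    have hynn : (0 : ℝ) ≤ ‖y‖ := norm_nonneg y
    have hm : ε / 2 ≤ ‖x‖ := by
      have h1 : ‖x - y‖ ≤ ‖x‖ + ‖y‖ := norm_sub_le x y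
      linarith
    have hmid0 : (0 : ℝ) ≤ ‖(1 / 2 : ℝ) • (x + y)‖ := norm_nonneg _
    have hmid : ‖(1 / 2 : ℝ) • (x + y)‖ ≤ (‖x‖ + ‖y‖) / 2 := by
      rw [norm_smul, Real.norm_eq_abs]
      have h1 : ‖x + y‖ ≤ ‖x‖ + ‖y‖ := norm_add_le x y
      rw [abs_of_pos (by norm_num : (0:ℝ) < 1/2)]
      linarith
    rcases le_or_gt δ (‖x‖ - ‖y‖) with hcase | hcase
    · -- norms far apart: convexity of the square gives the gap
      have hsq : ‖(1 / 2 : ℝ) • (x + y)‖ ^ 2 ≤ ((‖x‖ + ‖y‖) / 2) ^ 2 := by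
        nlinarith
      have hsq2 : δ ^ 2 ≤ (‖x‖ - ‖y‖) ^ 2 := by nlinarith
      nlinarith
    · -- norms close: use uniform convexity
      have hmpos : 0 < ‖x‖ := by linarith
      have hux : ‖(1 / ‖x‖ : ℝ) • x‖ ≤ 1 := by
        rw [norm_smul, Real.norm_eq_abs, abs_of_pos (by positivity)]
        rw [div_mul_eq_mul_div, one_mul, div_le_one hmpos]
      have huy : ‖(1 / ‖x‖ : ℝ) • y‖ ≤ 1 := by
        rw [norm_smul, Real.norm_eq_abs, abs_of_pos (by positivity)]
        rw [div_mul_eq_mul_div, one_mul, div_le_one hmpos]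
        exact hyx
      have hdist : ε / (2 * b) ≤ ‖(1 / ‖x‖ : ℝ) • x - (1 / ‖x‖ : ℝ) • y‖ := by
        rw [← smul_sub, norm_smul, Real.norm_eq_abs, abs_of_pos (by positivity)]
        rw [div_mul_eq_mul_div, one_mul]
        rw [div_le_div_iff₀ (by linarith) hmpos]
        exact mul_le_mul hxy (by linarith) hmpos.le (le_trans hε0.le hxy)
      have huc := hX_uc (ε / (2 * b)) hε'pos hε'le _ _ hux huy hdist
      rw [← hη'] at huc
      have hcomb : (1 / 2 : ℝ) • ((1 / ‖x‖ : ℝ) • x + (1 / ‖x‖ : ℝ) • y)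
          = (1 / ‖x‖ : ℝ) • ((1 / 2 : ℝ) • (x + y)) := by
        rw [smul_comm, smul_add]; module
      rw [hcomb, norm_smul, Real.norm_eq_abs, abs_of_pos (by positivity),
        div_mul_eq_mul_div, one_mul, div_le_iff₀ hmpos] at huc
      -- huc : ‖(1/2)•(x+y)‖ ≤ (1 - η') * ‖x‖
      have hbound : ‖(1 / 2 : ℝ) • (x + y)‖ ^ 2 ≤ ((1 - η') * ‖x‖) ^ 2 := by
        nlinarith
      have hlow : ‖x‖ ^ 2 - ‖x‖ * δ ≤ (1 / 2) * ‖x‖ ^ 2 + (1 / 2) * ‖y‖ ^ 2 := by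
        nlinarith [mul_nonneg (sub_nonneg.mpr hyx) (by linarith : (0:ℝ) ≤ ‖x‖ + ‖y‖)]
      have hδb : ‖x‖ * δ ≤ ε ^ 2 / 72 * η' ^ 2 := by
        calc ‖x‖ * δ ≤ b * (ε ^ 2 / (72 * b) * η' ^ 2) := by
              apply mul_le_mul hx hδle hδpos.le hb0.le
          _ = ε ^ 2 / 72 * η' ^ 2 := by field_simp
      have hη2 : ε ^ 2 / 4 * η' ^ 2 ≤ ‖x‖ ^ 2 * η' := by
        have hηsq : η' ^ 2 ≤ η' := by nlinarith
        have h1 : ε ^ 2 / 4 ≤ ‖x‖ ^ 2 := by nlinarith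
        calc ε ^ 2 / 4 * η' ^ 2 ≤ ε ^ 2 / 4 * η' := by nlinarith [sq_nonneg ε]
          _ ≤ ‖x‖ ^ 2 * η' := by nlinarith
      nlinarith
  intro x y hx hy hxy
  rcases le_total ‖y‖ ‖x‖ with h | h
  · exact key x y hx hy h hxy
  · have h2 := key y x hy hx h (by rwa [norm_sub_rev])
    rw [add_comm y x] at h2
    linarith
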